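/- arXiv:1006.4658 — 2 statements merged into one kernel-verified Lean document; each statement's English description precedes it below -/
import Mathlib

section
/- Let D be an acyclic digraph and let u, v be distinct roots of D. Then: (i) if x, y are distinct non-root vertices with N⁻_D(x) = N⁻_D(y), then (D ▷ xy) ▷ uv = (D ▷ uv) ▷ xy; (ii) for every vertex x of D, (D*x) ▷ uv = (D ▷ uv) * x, where in each case the slide on uv is the arc-set operation A ↦ A Δ {(v,w) : w ∈ N⁺(u)} computed in the digraph to which it is applied. -/
/-- Local complementation at `x`: arc set `A(D) Δ (N⁻_D(x) × N⁺_D(x))`. -/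
def localComp {V : Type*} (R : V → V → Prop) (x : V) : V → V → Prop :=
  fun a b => Xor' (R a b) (R a x ∧ R x b)

/-- The slide on `uv`: arc set `A(D) Δ {(v,w) : w ∈ N⁺_D(u)}`. -/
def slideRel {V : Type*} (R : V → V → Prop) (u v : V) : V → V → Prop :=
  fun a b => Xor' (R a b) (a = v ∧ R u b)

/-- A digraph, given by its arc relation, is acyclic if it has no directed
cycle. -/
def AcyclicRel {V : Type*} (R : V → V → Prop) : Prop :=
  ∀ v : V, ¬ Relation.TransGen R v v

/-- Let `D` be an acyclic digraph and `u ≠ v` roots of `D`. Then (i) slides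
on pairs of non-roots with the same in-neighborhoods commute with the slide
on `uv`, and (ii) local complementations commute with the slide on `uv`,
where each slide/local complementation is computed in the digraph to which it
is applied. -/
theorem root_slide_commutes {V : Type*} [Fintype V] (R : V → V → Prop)
    (hac : AcyclicRel R) (u v : V) (huv : u ≠ v)
    (hu : ∀ w, ¬ R w u) (hv : ∀ w, ¬ R w v) :
    (∀ x y : V, x ≠ y → (∃ w, R w x) → (∃ w, R w y) → (∀ w, R w x ↔ R w y) →
      slideRel (slideRel R x y) u v = slideRel (slideRel R u v) x y) ∧
    (∀ x : V, slideRel (localComp R x) u v = localComp (slideRel R u v) x) := by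
  constructor
  · intro x y hxy hx hy _
    obtain ⟨wx, hwx⟩ := hx
    obtain ⟨wy, hwy⟩ := hy
    have hxv : x ≠ v := fun h => hv wx (h ▸ hwx)
    have hyu : y ≠ u := fun h => hu wy (h ▸ hwy)
    have hyv : y ≠ v := fun h => hv wy (h ▸ hwy)
    funext a b
    simp only [slideRel, Xor', Xor, eq_iff_iff, hxv, Ne.symm hyu, false_and, and_false,
      not_false_iff, and_true, or_false]
    by_cases hav : a = v
    · subst hav
      simp [huv.symm, Ne.symm hyv]
    · simp [hav]
  · intro x
    funext a b
    simp only [slideRel, localComp, Xor', Xor, eq_iff_iff]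
    have h1 := hv a
    have h2 := hv u
    have h3 := hv x
    by_cases hxv : x = v
    · subst hxv
      simp [h1, h2, h3]
    · simp only [hxv, false_and, and_false, not_false_iff, and_true, or_false]
      by_cases hav : a = v
      · subst hav
        simp only [eq_self_iff_true, true_and]
        by_cases p1 : R a b <;> by_cases p2 : R a x <;> by_cases p3 : R x b <;>
          by_cases p4 : R u b <;> by_cases p5 : R u x <;> simp_all
      · simp [hav]
end

section
/- Let D and H be acyclic digraphs with V(D) = V(H). Then H can be obtained from D by applying a finite sequence of slides, each performed on a pair of roots, if and only if: (1) L₀(D) = L₀(H) and the induced subgraphs D∖L₀(D) and H∖L₀(H) are equal; and (2) the 𝔽₂-row spaces of the submatrices A_D[L₀(D), V(D)∖L₀(D)] and A_H[L₀(H), V(H)∖L₀(H)] coincide. -/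
/-- One slide performed on a pair of distinct roots. -/
inductive RootSlide {V : Type*} : (V → V → Prop) → (V → V → Prop) → Prop
  | mk (R : V → V → Prop) (u v : V) (h : u ≠ v)
      (hu : ∀ w, ¬ R w u) (hv : ∀ w, ¬ R w v) : RootSlide R (slideRel R u v)

open Classical in
/-- The row of the adjacency matrix of `R` indexed by `u`, as a vector over
`𝔽₂`.  (For `u` a root, its entries at root columns are automatically `0`, so
this row carries exactly the submatrix `A_R[L₀, V∖L₀]` row.) -/
noncomputable def rowVec {V : Type*} (R : V → V → Prop) (u : V) : V → ZMod 2 :=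
  fun y => if R u y then 1 else 0

/-- The `𝔽₂`-row space of the submatrix `A_R[L₀(R), V∖L₀(R)]` (rows indexed by
the roots of `R`; columns at roots vanish automatically). -/
noncomputable def rootRowSpace {V : Type*} (R : V → V → Prop) :
    Submodule (ZMod 2) (V → ZMod 2) :=
  Submodule.span (ZMod 2) {f | ∃ u : V, (∀ w, ¬ R w u) ∧ f = rowVec R u}

set_option linter.unusedSectionVars false
set_option linter.unusedVariables false
set_option linter.unnecessarySeqFocus false

namespace RootSlideAux

open Relation Function Submodule


open Relation Function Submodule

section Moves
variable {ι : Type v} [DecidableEq ι]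

/-- Elementary move: add row `u` to row `v`, for `u ≠ v` both in `s`. -/
inductive Mv {W : Type u} [AddCommGroup W] (s : Finset ι) :
    (ι → W) → (ι → W) → Prop
  | mk (f : ι → W) (u v : ι) (hu : u ∈ s) (hv : v ∈ s) (huv : u ≠ v) :
      Mv s f (Function.update f v (f v + f u))

variable {W : Type u} [AddCommGroup W] [Module (ZMod 2) W]

lemma addself (w : W) : w + w = 0 := by
  have h : (2 : ZMod 2) • w = w + w := two_smul _ w
  have h2 : (2 : ZMod 2) = 0 := by decide
  rw [h2, zero_smul] at h
  exact h.symm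

lemma zmod2_cases (c : ZMod 2) : c = 0 ∨ c = 1 := by revert c; decide

lemma mv_agree {s : Finset ι} {f f' : ι → W} (h : Mv s f f') {i : ι} (hi : i ∉ s) :
    f' i = f i := by
  cases h with
  | mk u v hu hv huv => exact Function.update_of_ne (fun he => hi (by rw [he]; exact hv)) _ _

lemma rtg_agree {s : Finset ι} {f f' : ι → W} (h : ReflTransGen (Mv s) f f')
    {i : ι} (hi : i ∉ s) : f' i = f i := by
  induction h with
  | refl => rfl
  | tail _ step ih => exact (mv_agree step hi).trans ih

/-- span of the updated family over a set `A` is unchanged. -/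
lemma span_update (A : Set ι) (f : ι → W) (u v : ι) (hu : u ∈ A) (hv : v ∈ A)
    (huv : u ≠ v) :
    span (ZMod 2) (Function.update f v (f v + f u) '' A) = span (ZMod 2) (f '' A) := by
  set g := Function.update f v (f v + f u) with hg
  have hgu : g u = f u := Function.update_of_ne huv _ _
  have hgv : g v = f v + f u := Function.update_self _ _ _
  apply le_antisymm
  · rw [span_le]
    rintro w ⟨i, hi, rfl⟩
    by_cases hiv : i = v
    · rw [hiv, hgv]
      exact add_mem (subset_span ⟨v, hv, rfl⟩) (subset_span ⟨u, hu, rfl⟩)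
    · rw [hg, Function.update_of_ne hiv]
      exact subset_span ⟨i, hi, rfl⟩
  · rw [span_le]
    rintro w ⟨i, hi, rfl⟩
    by_cases hiv : i = v
    · have hfv : f i = g v + g u := by
        rw [hgv, hgu, add_assoc, addself, add_zero, hiv]
      rw [hfv]
      exact add_mem (subset_span ⟨v, hv, rfl⟩) (subset_span ⟨u, hu, rfl⟩)
    · have : f i = g i := (Function.update_of_ne hiv _ _).symm
      rw [this]
      exact subset_span ⟨i, hi, rfl⟩

lemma mv_span {s : Finset ι} {f f' : ι → W} (h : Mv s f f') :
    span (ZMod 2) (f' '' ↑s) = span (ZMod 2) (f '' ↑s) := by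
  cases h with
  | mk u v hu hv huv =>
    apply span_update (↑s : Set ι) f u v (Finset.mem_coe.mpr hu) (Finset.mem_coe.mpr hv) huv

lemma rtg_span {s : Finset ι} {f f' : ι → W} (h : ReflTransGen (Mv s) f f') :
    span (ZMod 2) (f' '' ↑s) = span (ZMod 2) (f '' ↑s) := by
  induction h with
  | refl => rfl
  | tail _ step ih => exact (mv_span step).trans ih

/-- add a subset-sum of other rows into row `u₁`. -/
lemma addT {s : Finset ι} {u₁ : ι} (hu : u₁ ∈ s) (d : ι → W) :
    ∀ T : Finset ι, T ⊆ s → u₁ ∉ T →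
      ReflTransGen (Mv s) d (Function.update d u₁ (d u₁ + ∑ v ∈ T, d v)) := by
  intro T
  induction T using Finset.induction_on with
  | empty =>
    intro _ _
    simp only [Finset.sum_empty, add_zero, Function.update_eq_self]
    exact ReflTransGen.refl
  | insert a T ha ih =>
    intro hTs huT
    have hTs' : T ⊆ s := fun x hx => hTs (Finset.mem_insert_of_mem hx)
    have huT' : u₁ ∉ T := fun hx => huT (Finset.mem_insert_of_mem hx)
    have hau : a ≠ u₁ := fun he => huT (he ▸ Finset.mem_insert_self a T)
    have has : a ∈ s := hTs (Finset.mem_insert_self a T)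
    refine (ih hTs' huT').tail ?_
    have step := Mv.mk (Function.update d u₁ (d u₁ + ∑ v ∈ T, d v)) a u₁ has hu hau
    convert step using 1
    funext i
    by_cases hi : i = u₁
    · subst hi
      simp only [Function.update_self, Function.update_idem,
        Function.update_of_ne hau, Finset.sum_insert ha]
      abel
    · simp only [Function.update_of_ne hi]

/-- swap two rows (three moves). -/
lemma swapT {s : Finset ι} {a b : ι} (ha : a ∈ s) (hb : b ∈ s) (hab : a ≠ b)
    (f : ι → W) :
    ReflTransGen (Mv s) f
      (Function.update (Function.update f a (f b)) b (f a)) := by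
  have hba : b ≠ a := hab.symm
  set g1 := Function.update f b (f b + f a) with hg1
  set g2 := Function.update g1 a (g1 a + g1 b) with hg2
  have s1 : Mv s f g1 := Mv.mk f a b ha hb hab
  have s2 : Mv s g1 g2 := Mv.mk g1 b a hb ha hba
  have s3 : Mv s g2 (Function.update g2 b (g2 b + g2 a)) := Mv.mk g2 a b ha hb hab
  have hg1a : g1 a = f a := Function.update_of_ne hab _ _
  have hg1b : g1 b = f b + f a := Function.update_self _ _ _
  have hg2a : g2 a = f b := by
    rw [hg2, Function.update_self, hg1a, hg1b]
    have : f a + (f b + f a) = (f a + f a) + f b := by abel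
    rw [this, addself, zero_add]
  have hg2b : g2 b = f b + f a := by
    rw [hg2, Function.update_of_ne hba, hg1b]
  have key : Function.update g2 b (g2 b + g2 a)
      = Function.update (Function.update f a (f b)) b (f a) := by
    funext i
    by_cases hib : i = b
    · rw [hib, Function.update_self, Function.update_self, hg2b, hg2a]
      have : (f b + f a) + f b = (f b + f b) + f a := by abel
      rw [this, addself, zero_add]
    · rw [Function.update_of_ne hib, Function.update_of_ne hib]
      by_cases hia : i = a
      · rw [hia, hg2a, Function.update_self]
      · rw [Function.update_of_ne hia, hg2, Function.update_of_ne hia, hg1,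
          Function.update_of_ne hib]
  exact ((ReflTransGen.single s1).tail s2).tail (key ▸ s3)

/-- subset-sum representation of span members over `ZMod 2`. -/
lemma mem_span_subsetsum {s : Finset ι} {d : ι → W} {x : W}
    (hx : x ∈ span (ZMod 2) (d '' ↑s)) :
    ∃ T : Finset ι, T ⊆ s ∧ x = ∑ v ∈ T, d v := by
  rw [Finsupp.mem_span_image_iff_linearCombination] at hx
  obtain ⟨l, hl, hlx⟩ := hx
  refine ⟨l.support, ?_, ?_⟩
  · intro i hi
    exact_mod_cast (Finsupp.mem_supported _ l).mp hl hi
  · rw [← hlx, Finsupp.linearCombination_apply, Finsupp.sum]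
    refine (Finset.sum_congr rfl fun i hi => ?_).symm
    have h1 : l i = 1 := by
      have := Finsupp.mem_support_iff.mp hi
      rcases zmod2_cases (l i) with h | h
      · exact absurd h this
      · exact h
    rw [h1, one_smul]

/-- set row `u₁` to any nonzero element of the span. -/
lemma setRow {s : Finset ι} {u₁ : ι} (hu : u₁ ∈ s) (d : ι → W) {x : W}
    (hx : x ∈ span (ZMod 2) (d '' ↑s)) (hx0 : x ≠ 0) :
    ∃ d', ReflTransGen (Mv s) d d' ∧ d' u₁ = x := by
  obtain ⟨T, hTs, hxT⟩ := mem_span_subsetsum hx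
  have hTne : T.Nonempty := by
    rcases Finset.eq_empty_or_nonempty T with h | h
    · exact absurd (by rw [hxT, h, Finset.sum_empty]) hx0
    · exact h
  obtain ⟨v₀, hv₀⟩ := hTne
  have hv₀s : v₀ ∈ s := hTs hv₀
  have c1 : ReflTransGen (Mv s) d
      (Function.update d v₀ (d v₀ + ∑ v ∈ T.erase v₀, d v)) :=
    addT hv₀s d (T.erase v₀) (fun i hi => hTs (Finset.mem_of_mem_erase hi))
      (Finset.notMem_erase _ _)
  have hsum : d v₀ + ∑ v ∈ T.erase v₀, d v = x := by
    rw [Finset.add_sum_erase _ _ hv₀, ← hxT]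
  rw [hsum] at c1
  have hd₁v₀ : Function.update d v₀ x v₀ = x := Function.update_self _ _ _
  by_cases hvu : v₀ = u₁
  · exact ⟨Function.update d v₀ x, c1, by rw [← hvu, hd₁v₀]⟩
  · have c2 := swapT hu hv₀s (Ne.symm hvu) (Function.update d v₀ x)
    refine ⟨_, c1.trans c2, ?_⟩
    rw [Function.update_of_ne (Ne.symm hvu), Function.update_self, hd₁v₀]

end Moves

section Moves2
variable {ι : Type v} [DecidableEq ι] {W : Type u} [AddCommGroup W] [Module (ZMod 2) W]

lemma mv_mono {s s' : Finset ι} (hss : s' ⊆ s) {f f' : ι → W} (h : Mv s' f f') :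
    Mv s f f' := by
  cases h with
  | mk u v hu hv huv => exact Mv.mk f u v (hss hu) (hss hv) huv

lemma rtg_lift {Q : Type u} [AddCommGroup Q] [Module (ZMod 2) Q]
    (q : W →ₗ[ZMod 2] Q) {s : Finset ι} :
    ∀ {g g' : ι → Q}, ReflTransGen (Mv s) g g' → ∀ f : ι → W,
      (fun i => q (f i)) = g →
      ∃ f', ReflTransGen (Mv s) f f' ∧ (fun i => q (f' i)) = g' := by
  intro g g' h
  induction h with
  | refl => exact fun f hf => ⟨f, ReflTransGen.refl, hf⟩
  | tail _ step ih =>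
    intro f hf
    obtain ⟨f', c, hq⟩ := ih f hf
    cases step with
    | mk u v hu hv huv =>
      subst hq
      refine ⟨Function.update f' v (f' v + f' u), c.tail (Mv.mk f' u v hu hv huv), ?_⟩
      funext i
      by_cases hiv : i = v
      · subst hiv
        simp only [Function.update_self, map_add]
      · simp only [Function.update_of_ne hiv]

lemma fixD [DecidableEq W] {s : Finset ι} {u₁ : ι} {x : W} (hx0 : x ≠ 0) (hu : u₁ ∈ s)
    (h : ι → W) (hhu : h u₁ = x) :
    ∀ n : ℕ, ∀ f : ι → W, f u₁ = x → (∀ v ∉ s, f v = h v) →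
      (∀ v, f v = h v ∨ f v = h v + x) →
      (Finset.filter (fun v => f v ≠ h v) s).card ≤ n →
      ReflTransGen (Mv s) f h := by
  intro n
  induction n with
  | zero =>
    intro f hfu hout hmix hcard
    have hemp : Finset.filter (fun v => f v ≠ h v) s = ∅ :=
      Finset.card_eq_zero.mp (Nat.le_zero.mp hcard)
    have hfh : f = h := by
      funext v
      by_cases hv : v ∈ s
      · by_contra hne
        have : v ∈ Finset.filter (fun v => f v ≠ h v) s :=
          Finset.mem_filter.mpr ⟨hv, hne⟩
        rw [hemp] at this
        exact absurd this (Finset.notMem_empty v)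
      · exact hout v hv
    rw [hfh]
  | succ n ih =>
    intro f hfu hout hmix hcard
    rcases Finset.eq_empty_or_nonempty (Finset.filter (fun v => f v ≠ h v) s) with
      hemp | ⟨v₀, hv₀⟩
    · have hfh : f = h := by
        funext v
        by_cases hv : v ∈ s
        · by_contra hne
          have : v ∈ Finset.filter (fun v => f v ≠ h v) s :=
            Finset.mem_filter.mpr ⟨hv, hne⟩
          rw [hemp] at this
          exact absurd this (Finset.notMem_empty v)
        · exact hout v hv
      rw [hfh]
    · have hv₀s : v₀ ∈ s := (Finset.mem_filter.mp hv₀).1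
      have hv₀ne : f v₀ ≠ h v₀ := (Finset.mem_filter.mp hv₀).2
      have hv₀x : f v₀ = h v₀ + x := (hmix v₀).resolve_left hv₀ne
      have hvu : v₀ ≠ u₁ := fun he => hv₀ne (by rw [he, hfu, hhu])
      have step : Mv s f (Function.update f v₀ (f v₀ + f u₁)) :=
        Mv.mk f u₁ v₀ hu hv₀s (Ne.symm hvu)
      set f' := Function.update f v₀ (f v₀ + f u₁) with hf'
      have hf'v₀ : f' v₀ = h v₀ := by
        rw [hf', Function.update_self, hv₀x, hfu, add_assoc, addself, add_zero]
      have hf'u : f' u₁ = x := by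
        rw [hf', Function.update_of_ne (Ne.symm hvu), hfu]
      have hf'out : ∀ v ∉ s, f' v = h v := fun v hv => by
        have : v ≠ v₀ := fun he => hv (he ▸ hv₀s)
        rw [hf', Function.update_of_ne this]
        exact hout v hv
      have hf'mix : ∀ v, f' v = h v ∨ f' v = h v + x := fun v => by
        by_cases hvv : v = v₀
        · rw [hvv]; exact Or.inl hf'v₀
        · rw [hf', Function.update_of_ne hvv]; exact hmix v
      have hsub : Finset.filter (fun v => f' v ≠ h v) s ⊆
          (Finset.filter (fun v => f v ≠ h v) s).erase v₀ := by
        intro v hv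
        have hvs : v ∈ s := (Finset.mem_filter.mp hv).1
        have hvne : f' v ≠ h v := (Finset.mem_filter.mp hv).2
        have hvv₀ : v ≠ v₀ := fun he => hvne (he ▸ hf'v₀)
        refine Finset.mem_erase.mpr ⟨hvv₀, Finset.mem_filter.mpr ⟨hvs, ?_⟩⟩
        rwa [hf', Function.update_of_ne hvv₀] at hvne
      have hcard' : (Finset.filter (fun v => f' v ≠ h v) s).card ≤ n := by
        have h1 := Finset.card_le_card hsub
        have h2 := Finset.card_erase_of_mem hv₀
        have h3 : 0 < (Finset.filter (fun v => f v ≠ h v) s).card :=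
          Finset.card_pos.mpr ⟨v₀, hv₀⟩
        omega
      exact (ReflTransGen.single step).trans (ih f' hf'u hf'out hf'mix hcard')

end Moves2

/-- Main abstract lemma: tuples with equal spans over the index set `s`,
agreeing off `s`, are connected by elementary moves. -/
lemma main_aux {ι : Type v} [DecidableEq ι] :
    ∀ (n : ℕ) {W : Type u} [AddCommGroup W] [Module (ZMod 2) W]
      (s : Finset ι) (d h : ι → W), s.card ≤ n → (∀ i ∉ s, d i = h i) →
      span (ZMod 2) (d '' ↑s) = span (ZMod 2) (h '' ↑s) →
      ReflTransGen (Mv s) d h := by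
  intro n
  induction n with
  | zero =>
    intro W _ _ s d h hcard hout _
    have hs : s = ∅ := Finset.card_eq_zero.mp (Nat.le_zero.mp hcard)
    have : d = h := funext fun i => hout i (by rw [hs]; exact Finset.notMem_empty i)
    rw [this]
  | succ n ih =>
    intro W _ _ s d h hcard hout hspan
    classical
    by_cases hz : ∀ u ∈ s, h u = 0
    · have hb : span (ZMod 2) (h '' ↑s) ≤ ⊥ := by
        rw [span_le]
        rintro w ⟨i, hi, rfl⟩
        rw [SetLike.mem_coe, Submodule.mem_bot]
        exact hz i hi
      have hdh : d = h := by
        funext i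
        by_cases hi : i ∈ s
        · have h1 : d i ∈ span (ZMod 2) (d '' ↑s) := subset_span ⟨i, hi, rfl⟩
          rw [hspan] at h1
          have h2 := hb h1
          rw [Submodule.mem_bot] at h2
          rw [h2, hz i hi]
        · exact hout i hi
      rw [hdh]
    · push_neg at hz
      obtain ⟨u₁, hu₁s, hx0⟩ := hz
      set x := h u₁ with hxdef
      have hxmem : x ∈ span (ZMod 2) (d '' ↑s) := by
        rw [hspan]
        exact subset_span ⟨u₁, hu₁s, rfl⟩
      obtain ⟨d', c1, hd'u⟩ := setRow hu₁s d hxmem hx0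
      have hd'span : span (ZMod 2) (d' '' ↑s) = span (ZMod 2) (d '' ↑s) := rtg_span c1
      have hd'out : ∀ i ∉ s, d' i = d i := fun i hi => rtg_agree c1 hi
      set s' := s.erase u₁ with hs'def
      have hins : insert u₁ s' = s := Finset.insert_erase hu₁s
      have hcoe : (↑s : Set ι) = insert u₁ (↑s' : Set ι) := by
        rw [← hins, Finset.coe_insert]
      set N : Submodule (ZMod 2) W := span (ZMod 2) {x} with hN
      set q := N.mkQ with hq
      have hqx : Submodule.map q N = ⊥ := by
        apply le_antisymm _ bot_le
        rw [Submodule.map_le_iff_le_comap]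
        intro w hw
        rw [Submodule.mem_comap, Submodule.mem_bot, hq, Submodule.mkQ_apply]
        exact (Submodule.Quotient.mk_eq_zero N).mpr hw
      have keyspan : ∀ (g : ι → W), g u₁ = x →
          Submodule.map q (span (ZMod 2) (g '' ↑s')) =
            Submodule.map q (span (ZMod 2) (g '' ↑s)) := by
        intro g hg
        rw [hcoe, Set.image_insert_eq, span_insert, Submodule.map_sup, hg, ← hN,
          hqx, bot_sup_eq]
      have hspanQ : span (ZMod 2) ((fun i => q (d' i)) '' ↑s')
          = span (ZMod 2) ((fun i => q (h i)) '' ↑s') := by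
        have e1 : ∀ (g : ι → W), (fun i => q (g i)) '' (↑s' : Set ι) = q '' (g '' ↑s') := by
          intro g
          rw [← Set.image_comp]
          rfl
        rw [e1, e1, Submodule.span_image, Submodule.span_image,
          keyspan d' hd'u, keyspan h rfl, hd'span, hspan]
      have hcard' : s'.card ≤ n := by
        have h2 : s'.card = s.card - 1 := by
          rw [hs'def]; exact Finset.card_erase_of_mem hu₁s
        have h3 : 0 < s.card := Finset.card_pos.mpr ⟨u₁, hu₁s⟩
        omega
      have houtQ : ∀ i ∉ s', (fun i => q (d' i)) i = (fun i => q (h i)) i := by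
        intro i hi
        by_cases his : i ∈ s
        · have : i = u₁ := by
            by_contra hne
            exact hi (Finset.mem_erase.mpr ⟨hne, his⟩)
          rw [this]
          simp only [hd'u]; rfl
        · have : i ∉ s' := hi
          simp only [hd'out i his, hout i his]
      have chainQ := ih s' (fun i => q (d' i)) (fun i => q (h i)) hcard' houtQ hspanQ
      obtain ⟨d'', c2, hq2⟩ := rtg_lift q chainQ d' rfl
      have hss : s' ⊆ s := Finset.erase_subset _ _
      have hd''u : d'' u₁ = x := by
        rw [rtg_agree c2 (Finset.notMem_erase u₁ s), hd'u]
      have hd''out : ∀ v ∉ s, d'' v = h v := by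
        intro v hv
        have hv' : v ∉ s' := fun hc => hv (hss hc)
        rw [rtg_agree c2 hv', hd'out v hv, hout v hv]
      have hmix : ∀ v, d'' v = h v ∨ d'' v = h v + x := by
        intro v
        have hqv : q (d'' v) = q (h v) := congrFun hq2 v
        have : d'' v - h v ∈ N := by
          have h0 : q (d'' v - h v) = 0 := by rw [map_sub, hqv, sub_self]
          rw [hq, Submodule.mkQ_apply] at h0
          exact (Submodule.Quotient.mk_eq_zero N).mp h0
        rw [hN, Submodule.mem_span_singleton] at this
        obtain ⟨c, hc⟩ := this
        rcases zmod2_cases c with h0 | h1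
        · left
          rw [h0, zero_smul] at hc
          exact sub_eq_zero.mp hc.symm
        · right
          rw [h1, one_smul] at hc
          have hc' := hc.symm
          rw [sub_eq_iff_eq_add] at hc'
          rw [hc', add_comm]
      exact c1.trans ((ReflTransGen.mono (fun a b => mv_mono hss : ∀ a b, Mv s' a b → Mv s a b) _ _ c2).trans
        (fixD hx0 hu₁s h rfl _ d'' hd''u hd''out hmix le_rfl))


section Digraph
variable {V : Type w}

lemma slide_root_iff (R : V → V → Prop) {u v : V} (huv : u ≠ v) (b : V) :
    (∀ a, ¬ slideRel R u v a b) ↔ (∀ a, ¬ R a b) := by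
  constructor
  · intro hS a hR
    by_cases hav : a = v
    · have hRvb : R v b := hav ▸ hR
      have hub : R u b := by
        by_contra hub
        exact hS v (Or.inl ⟨hRvb, fun hc => hub hc.2⟩)
      exact hS u (Or.inl ⟨hub, fun hc => huv hc.1⟩)
    · exact hS a (Or.inl ⟨hR, fun hc => hav hc.1⟩)
  · intro hR a hS
    cases hS with
    | inl h => exact hR a h.1
    | inr h => exact hR u h.1.2

lemma slide_nonroot (R : V → V → Prop) {u v x : V} (hx : x ≠ v) (y : V) :
    slideRel R u v x y ↔ R x y := by
  constructor
  · rintro (⟨h, -⟩ | ⟨⟨hxv, -⟩, -⟩)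
    · exact h
    · exact absurd hxv hx
  · intro h
    exact Or.inl ⟨h, fun hc => hx hc.1⟩


lemma rowVec_apply (R : V → V → Prop) (u y : V) [Decidable (R u y)] :
    rowVec R u y = if R u y then 1 else 0 := by
  unfold rowVec
  congr

lemma rel_iff_rowVec (R : V → V → Prop) (a b : V) : R a b ↔ rowVec R a b = 1 := by
  classical
  rw [rowVec_apply]
  by_cases h : R a b <;> simp [h]

lemma rowVec_slide [DecidableEq V] (R : V → V → Prop) (u v : V) (huv : u ≠ v) :
    rowVec (slideRel R u v) =
      Function.update (rowVec R) v (rowVec R v + rowVec R u) := by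
  classical
  funext a y
  by_cases hav : a = v
  · rw [hav, Function.update_self]
    show rowVec (slideRel R u v) v y = rowVec R v y + rowVec R u y
    rw [rowVec_apply, rowVec_apply, rowVec_apply]
    by_cases h1 : R v y <;> by_cases h2 : R u y <;>
      simp [slideRel, Xor', h1, h2] <;> decide
  · rw [Function.update_of_ne hav]
    rw [rowVec_apply, rowVec_apply]
    simp only [slide_nonroot R hav y]

end Digraph

section Digraph2
variable {V : Type w}


lemma rowspace_eq (R : V → V → Prop) :
    rootRowSpace R = span (ZMod 2) (rowVec R '' {u | ∀ w, ¬ R w u}) := by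
  unfold rootRowSpace
  congr 1
  ext f
  constructor
  · rintro ⟨u, hu, rfl⟩
    exact ⟨u, hu, rfl⟩
  · rintro ⟨u, hu, rfl⟩
    exact ⟨u, hu, rfl⟩


lemma rootslide_step {R S : V → V → Prop} (h : RootSlide R S) :
    (∀ b, (∀ a, ¬ R a b) ↔ (∀ a, ¬ S a b)) ∧
    (∀ x y : V, (∃ w, R w x) → (R x y ↔ S x y)) ∧
    rootRowSpace R = rootRowSpace S := by
  classical
  cases h with
  | mk u v huv hu hv =>
    refine ⟨fun b => (slide_root_iff R huv b).symm, ?_, ?_⟩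
    · intro x y hx
      obtain ⟨w, hw⟩ := hx
      have hxv : x ≠ v := fun he => hv w (he ▸ hw)
      exact (slide_nonroot R hxv y).symm
    · rw [rowspace_eq, rowspace_eq]
      have hroots : {b : V | ∀ a, ¬ slideRel R u v a b} = {b | ∀ a, ¬ R a b} :=
        Set.ext fun b => slide_root_iff R huv b
      rw [hroots, rowVec_slide R u v huv]
      exact (span_update {b | ∀ a, ¬ R a b} (rowVec R) u v hu hv huv).symm

lemma forward {D H : V → V → Prop} (h : Relation.ReflTransGen RootSlide D H) :
    ({v : V | ∀ w, ¬ D w v} = {v : V | ∀ w, ¬ H w v}) ∧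
    (∀ x y : V, (∃ w, D w x) → (∃ w, D w y) → (D x y ↔ H x y)) ∧
    rootRowSpace D = rootRowSpace H := by
  induction h with
  | refl => exact ⟨rfl, fun x y _ _ => Iff.rfl, rfl⟩
  | tail _ step ih =>
    obtain ⟨h1, h2, h3⟩ := ih
    obtain ⟨s1, s2, s3⟩ := rootslide_step step
    refine ⟨?_, ?_, h3.trans s3⟩
    · exact Set.ext fun b => (Set.ext_iff.mp h1 b).trans (s1 b)
    · intro x y hx hy
      refine (h2 x y hx hy).trans (s2 x y ?_)
      by_contra hc
      push_neg at hc
      obtain ⟨w, hw⟩ := hx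
      exact (Set.ext_iff.mp h1 x).mpr hc w hw

lemma conv [DecidableEq V] {s : Finset V} :
    ∀ {f g : V → (V → ZMod 2)}, Relation.ReflTransGen (Mv s) f g →
      ∀ R : V → V → Prop, rowVec R = f → (∀ b, (∀ a, ¬ R a b) ↔ b ∈ s) →
      ∃ R', Relation.ReflTransGen RootSlide R R' ∧ rowVec R' = g ∧
        (∀ b, (∀ a, ¬ R' a b) ↔ b ∈ s) := by
  intro f g h
  induction h with
  | refl => exact fun R hf hr => ⟨R, Relation.ReflTransGen.refl, hf, hr⟩
  | tail _ step ih =>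
    intro R hf hr
    obtain ⟨R', c, hR'f, hR'r⟩ := ih R hf hr
    cases step with
    | mk u v hu hv huv =>
      subst hR'f
      refine ⟨slideRel R' u v,
        c.tail (RootSlide.mk R' u v huv ((hR'r u).mpr hu) ((hR'r v).mpr hv)), ?_, ?_⟩
      · rw [rowVec_slide R' u v huv]
      · intro b
        exact (slide_root_iff R' huv b).trans (hR'r b)

end Digraph2

end RootSlideAux

open RootSlideAux in
/-- Characterization of digraphs obtainable by slides on roots: for acyclic
digraphs `D`, `H` on the same vertex set, `H` is obtained from `D` by a
finite sequence of slides on pairs of roots if and only if (1) `D` and `H`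
have the same roots and the same induced subgraph on the non-roots, and
(2) the `𝔽₂`-row spaces of `A_D[L₀(D), V∖L₀(D)]` and `A_H[L₀(H), V∖L₀(H)]`
coincide. -/
theorem rootSlide_characterization {V : Type*} [Fintype V]
    (D H : V → V → Prop) (hD : AcyclicRel D) (hH : AcyclicRel H) :
    Relation.ReflTransGen RootSlide D H ↔
      (({v : V | ∀ w, ¬ D w v} = {v : V | ∀ w, ¬ H w v}) ∧
       (∀ x y : V, (∃ w, D w x) → (∃ w, D w y) → (D x y ↔ H x y)) ∧
       rootRowSpace D = rootRowSpace H) := by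
  classical
  constructor
  · exact forward
  · rintro ⟨h1, h2, h3⟩
    set L : Set V := {v : V | ∀ w, ¬ D w v} with hL
    set s : Finset V := (Set.toFinite L).toFinset with hs
    have hmem : ∀ v, v ∈ s ↔ (∀ w, ¬ D w v) := fun v => Set.Finite.mem_toFinset _
    have hcoe : (↑s : Set V) = L := Set.Finite.coe_toFinset _
    have hout : ∀ i ∉ s, rowVec D i = rowVec H i := by
      intro i hi
      have hiD : ∃ w, D w i := by
        rw [hmem] at hi
        push_neg at hi
        exact hi
      funext y
      have hiff : D i y ↔ H i y := by
        by_cases hy : ∀ w, ¬ D w y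
        · have hyH : ∀ w, ¬ H w y := (Set.ext_iff.mp h1 y).mp hy
          exact iff_of_false (hy i) (hyH i)
        · push_neg at hy
          exact h2 i y hiD hy
      rw [rowVec_apply, rowVec_apply]
      by_cases hd : D i y
      · rw [if_pos hd, if_pos (hiff.mp hd)]
      · rw [if_neg hd, if_neg (fun hh => hd (hiff.mpr hh))]
    have hspan : Submodule.span (ZMod 2) (rowVec D '' ↑s) = Submodule.span (ZMod 2) (rowVec H '' ↑s) := by
      have e1 : (↑s : Set V) = {v : V | ∀ w, ¬ H w v} := by rw [hcoe]; exact h1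
      have e2 := rowspace_eq D
      have e3 := rowspace_eq H
      calc Submodule.span (ZMod 2) (rowVec D '' ↑s) = rootRowSpace D := by rw [hcoe, e2]
        _ = rootRowSpace H := h3
        _ = Submodule.span (ZMod 2) (rowVec H '' ↑s) := by rw [e3, e1]
    have main := main_aux s.card s (rowVec D) (rowVec H) le_rfl hout hspan
    obtain ⟨R', c, hR'g, _⟩ := conv main D rfl (fun b => (hmem b).symm)
    have hRH : R' = H := by
      funext a b
      apply propext
      have e := congrFun (congrFun hR'g a) b
      have e2 : rowVec R' a b = 1 ↔ H a b := by
        rw [e]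
        exact (rel_iff_rowVec H a b).symm
      exact (rel_iff_rowVec R' a b).trans e2
    rw [← hRH]
    exact c
end
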